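/- Let Λ : ℝ → [0,1] be decreasing and let ρ_α (α ∈ [0,1]) be a family of functionals on L^p satisfying cash additivity: ρ_α(X+m) = ρ_α(X)+m for all m ∈ ℝ. Then the Lambda functional ρ_Λ(X) := sup_{x ∈ ℝ}(ρ_{Λ(x)}(X) ⊓ x) is cash subadditive: ρ_Λ(X + c) ≤ ρ_Λ(X) + c for all c ≥ 0. -/

import Mathlib

open MeasureTheory

theorem stmt_8 {Ω : Type*} [MeasurableSpace Ω] (μ : Measure Ω) [IsProbabilityMeasure μ]
    (p : ℝ) (hp : 1 ≤ p)
    (ρ : ℝ → (Ω → ℝ) → ℝ)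
    (hcash : ∀ a ∈ Set.Icc (0:ℝ) 1, ∀ (X : Ω → ℝ) (m : ℝ),
      ρ a (fun ω => X ω + m) = ρ a X + m)
    (Λ : ℝ → ℝ) (hΛ : Antitone Λ) (hΛ01 : ∀ x, Λ x ∈ Set.Icc (0:ℝ) 1)
    (X : Ω → ℝ) (hX : MemLp X (ENNReal.ofReal p) μ)
    (c : ℝ) (hc : 0 ≤ c) :
    (⨆ x : ℝ, min ((ρ (Λ x) (fun ω => X ω + c) : ℝ) : EReal) ((x : ℝ) : EReal)) ≤
      (⨆ x : ℝ, min ((ρ (Λ x) X : ℝ) : EReal) ((x : ℝ) : EReal)) + (c : EReal) := by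
  refine iSup_le fun x => ?_
  have h1 : ρ (Λ x) (fun ω => X ω + c) = ρ (Λ x) X + c := hcash _ (hΛ01 x) X c
  rw [h1]
  have coemin : ∀ a b : ℝ, ((min a b : ℝ) : EReal) = min (a : EReal) (b : EReal) :=
    fun a b => (EReal.coe_strictMono.monotone).map_min
  have hr : min (ρ (Λ x) X + c) x ≤ min (ρ (Λ x) X) x + c := by
    rcases le_total (ρ (Λ x) X) x with h | h
    · rw [min_eq_left h]; exact min_le_left _ _
    · rw [min_eq_right h]; exact le_trans (min_le_right _ _) (by linarith)
  calc min ((ρ (Λ x) X + c : ℝ) : EReal) ((x : ℝ) : EReal)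
      = ((min (ρ (Λ x) X + c) x : ℝ) : EReal) := (coemin _ _).symm
    _ ≤ ((min (ρ (Λ x) X) x + c : ℝ) : EReal) := EReal.coe_le_coe_iff.mpr hr
    _ = min ((ρ (Λ x) X : ℝ) : EReal) ((x : ℝ) : EReal) + (c : EReal) := by
        rw [EReal.coe_add, coemin]
    _ ≤ (⨆ x : ℝ, min ((ρ (Λ x) X : ℝ) : EReal) ((x : ℝ) : EReal)) + (c : EReal) :=
        add_le_add_left (le_iSup (fun y : ℝ => min ((ρ (Λ y) X : ℝ) : EReal) ((y : ℝ) : EReal)) x) _
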